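/- Let d ≥ 1, let E ⊆ (0,∞) contain {2^j : j ∈ ℤ}, let β > 0, and suppose A := sup_{j ∈ ℤ} ∫_1^2 d(s, E_j)^{−1+2β} ds < ∞. Let g : ℝ^d → ℂ be bounded and supported in the annulus {1/4 ≤ |ξ| ≤ 4}. Then there is a constant C depending only on d such that for every measurable m : ℝ^d → ℂ, sup_{k ∈ ℤ} ∫_{ℝ^d} ( ∑_{j ∈ ℤ} ∫_1^2 d(s, E_j)^{−1+2β} |m(2^{j+k} s ξ)|^2 ds ) |g(ξ)|^2 dξ ≤ C A (sup_ξ |g(ξ)|)^2 ∫_{ℝ^d} |m(ξ)|^2 |ξ|^{−d} dξ. -/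

import Mathlib

open MeasureTheory
open scoped ENNReal NNReal

/-- `E_j := (2^{-j} E) ∩ [1,2]`. -/
def dilSet (E : Set ℝ) (j : ℤ) : Set ℝ :=
  {s : ℝ | (2 : ℝ) ^ j * s ∈ E} ∩ Set.Icc 1 2

lemma lint_comp_smul {d : ℕ} (f : EuclideanSpace ℝ (Fin d) → ℝ≥0∞)
    (hf : Measurable f) {c : ℝ} (hc : c ≠ 0) :
    ∫⁻ ξ, f (c • ξ) = ENNReal.ofReal |(c ^ d)⁻¹| * ∫⁻ ξ, f ξ := by
  rw [← lintegral_map hf (measurable_const_smul c), Measure.map_addHaar_smul volume hc,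
    lintegral_smul_measure, finrank_euclideanSpace_fin, smul_eq_mul]

lemma scale_est {d : ℕ} (m : EuclideanSpace ℝ (Fin d) → ℂ) (hm : Measurable m)
    {c : ℝ} (hc : 0 < c) :
    ∫⁻ ξ in {ξ : EuclideanSpace ℝ (Fin d) | ‖ξ‖ ∈ Set.Icc (1/4 : ℝ) 4},
        (‖m (c • ξ)‖₊ : ℝ≥0∞) ^ 2 ≤
      (4 : ℝ≥0∞) ^ d * ∫⁻ η in {η : EuclideanSpace ℝ (Fin d) | ‖η‖ ∈ Set.Icc (c/4) (4*c)},
        (‖m η‖₊ : ℝ≥0∞) ^ 2 * (‖η‖₊ : ℝ≥0∞) ^ (-(d : ℝ)) := by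
  have hS : MeasurableSet {ξ : EuclideanSpace ℝ (Fin d) | ‖ξ‖ ∈ Set.Icc (1/4 : ℝ) 4} :=
    measurable_norm measurableSet_Icc
  have hT : MeasurableSet {η : EuclideanSpace ℝ (Fin d) | ‖η‖ ∈ Set.Icc (c/4) (4*c)} :=
    measurable_norm measurableSet_Icc
  set h : EuclideanSpace ℝ (Fin d) → ℝ≥0∞ :=
    fun η => (‖m η‖₊ : ℝ≥0∞) ^ 2 * (‖η‖₊ : ℝ≥0∞) ^ (-(d : ℝ)) with hdef
  have hhm : Measurable h :=
    ((hm.nnnorm.coe_nnreal_ennreal).pow_const 2).mul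
      ((measurable_nnnorm.coe_nnreal_ennreal).pow_const (-(d : ℝ)))
  set K : ℝ≥0∞ := (ENNReal.ofReal (4 * c)) ^ d with hK
  set F : EuclideanSpace ℝ (Fin d) → ℝ≥0∞ :=
    fun η => K * Set.indicator {η : EuclideanSpace ℝ (Fin d) | ‖η‖ ∈ Set.Icc (c/4) (4*c)} h η
    with hF
  have hFm : Measurable F := (hhm.indicator hT).const_mul K
  have key : ∀ ξ, Set.indicator {ξ : EuclideanSpace ℝ (Fin d) | ‖ξ‖ ∈ Set.Icc (1/4 : ℝ) 4}
      (fun ξ => (‖m (c • ξ)‖₊ : ℝ≥0∞) ^ 2) ξ ≤ F (c • ξ) := by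
    intro ξ
    by_cases hξ : ξ ∈ {ξ : EuclideanSpace ℝ (Fin d) | ‖ξ‖ ∈ Set.Icc (1/4 : ℝ) 4}
    · rw [Set.indicator_of_mem hξ]
      obtain ⟨hξ1, hξ2⟩ := hξ
      have hn : ‖c • ξ‖ = c * ‖ξ‖ := by
        rw [norm_smul, Real.norm_eq_abs, abs_of_pos hc]
      have hmem : c • ξ ∈ {η : EuclideanSpace ℝ (Fin d) | ‖η‖ ∈ Set.Icc (c/4) (4*c)} := by
        constructor <;> rw [hn] <;> nlinarith
      have h2 : (0:ℝ) < ‖c • ξ‖ := lt_of_lt_of_le (by positivity : (0:ℝ) < c/4) hmem.1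
      have h1 : (‖c • ξ‖₊ : ℝ≥0∞) ≤ ENNReal.ofReal (4*c) := by
        rw [← ENNReal.ofReal_coe_nnreal, coe_nnnorm]
        exact ENNReal.ofReal_le_ofReal hmem.2
      have hne : ((‖c • ξ‖₊ : ℝ≥0∞)) ^ d ≠ 0 := by
        apply pow_ne_zero
        simpa using h2.ne'
      have hnt : ((‖c • ξ‖₊ : ℝ≥0∞)) ^ d ≠ ⊤ := by
        exact ENNReal.pow_ne_top ENNReal.coe_ne_top
      have hrw : ((‖c • ξ‖₊ : ℝ≥0∞)) ^ (-(d:ℝ)) = (((‖c • ξ‖₊ : ℝ≥0∞)) ^ d)⁻¹ := by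
        rw [← ENNReal.rpow_natCast, ← ENNReal.rpow_neg]
      rw [hF]
      simp only [Set.indicator_of_mem hmem, hdef, hrw, hK]
      calc (‖m (c • ξ)‖₊ : ℝ≥0∞) ^ 2
          = (‖m (c • ξ)‖₊ : ℝ≥0∞) ^ 2 *
            (((‖c • ξ‖₊ : ℝ≥0∞)) ^ d * (((‖c • ξ‖₊ : ℝ≥0∞)) ^ d)⁻¹) := by
            rw [ENNReal.mul_inv_cancel hne hnt, mul_one]
        _ ≤ (‖m (c • ξ)‖₊ : ℝ≥0∞) ^ 2 *
            ((ENNReal.ofReal (4*c)) ^ d * (((‖c • ξ‖₊ : ℝ≥0∞)) ^ d)⁻¹) := by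
            gcongr
        _ = (ENNReal.ofReal (4*c)) ^ d *
            ((‖m (c • ξ)‖₊ : ℝ≥0∞) ^ 2 * (((‖c • ξ‖₊ : ℝ≥0∞)) ^ d)⁻¹) := by ring
    · rw [Set.indicator_of_notMem hξ]; exact zero_le
  calc ∫⁻ ξ in {ξ : EuclideanSpace ℝ (Fin d) | ‖ξ‖ ∈ Set.Icc (1/4 : ℝ) 4},
        (‖m (c • ξ)‖₊ : ℝ≥0∞) ^ 2
      = ∫⁻ ξ, Set.indicator {ξ : EuclideanSpace ℝ (Fin d) | ‖ξ‖ ∈ Set.Icc (1/4 : ℝ) 4}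
          (fun ξ => (‖m (c • ξ)‖₊ : ℝ≥0∞) ^ 2) ξ := (lintegral_indicator hS _).symm
    _ ≤ ∫⁻ ξ, F (c • ξ) := lintegral_mono key
    _ = ENNReal.ofReal |(c ^ d)⁻¹| * ∫⁻ η, F η := lint_comp_smul F hFm hc.ne'
    _ = ENNReal.ofReal |(c ^ d)⁻¹| * (K * ∫⁻ η in
          {η : EuclideanSpace ℝ (Fin d) | ‖η‖ ∈ Set.Icc (c/4) (4*c)}, h η) := by
        rw [hF]
        rw [lintegral_const_mul K (hhm.indicator hT), lintegral_indicator hT]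
    _ = (4 : ℝ≥0∞) ^ d * ∫⁻ η in
          {η : EuclideanSpace ℝ (Fin d) | ‖η‖ ∈ Set.Icc (c/4) (4*c)}, h η := by
        rw [← mul_assoc]
        congr 1
        rw [hK, ← ENNReal.ofReal_pow (by positivity), ← ENNReal.ofReal_mul (by positivity)]
        have : |(c ^ d)⁻¹| * (4 * c) ^ d = 4 ^ d := by
          rw [abs_of_pos (by positivity), mul_pow]
          field_simp
        rw [this]
        simp [ENNReal.ofReal_pow]

lemma count_aux {X : Type*} [NormedAddCommGroup X] (k : ℤ) (f : X → ℝ≥0∞) (η : X) :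
    ∑' j : ℤ, Set.indicator
      {η : X | ‖η‖ ∈ Set.Icc ((2:ℝ)^(j+k)/4) (8 * 2^(j+k))} f η ≤ 6 * f η := by
  by_cases hr : 0 < ‖η‖
  · set L := Int.log 2 ‖η‖ with hL
    have hL1 : (2:ℝ)^L ≤ ‖η‖ := Int.zpow_log_le_self (by norm_num) hr
    have hL2 : ‖η‖ < 2^(L+1) := Int.lt_zpow_succ_log_self (by norm_num) _
    have hsupp : ∀ j ∉ Finset.Icc (L-3-k) (L+2-k),
        Set.indicator {η : X | ‖η‖ ∈ Set.Icc ((2:ℝ)^(j+k)/4) (8 * 2^(j+k))} f η = 0 := by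
      intro j hj
      rw [Set.indicator_of_notMem]
      intro hmem
      apply hj
      obtain ⟨h1, h2⟩ := hmem
      have h43 : (2:ℝ)^(L+3) = 2^(L+1) * 2^(2:ℤ) := by
        rw [← zpow_add₀ (two_ne_zero (α := ℝ))]
        congr 1
        omega
      have h4 : (2:ℝ)^(2:ℤ) = 4 := by norm_num
      have e1 : (2:ℝ)^(j+k) < 2^(L+3) := by
        rw [h43, h4]
        calc (2:ℝ)^(j+k) ≤ 4*‖η‖ := by linarith
          _ < 2^(L+1)*4 := by linarith
          _ = 2^(L+1)*4 := rfl
      have e2 : (2:ℝ)^L ≤ 2^(j+k+3) := by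
        calc (2:ℝ)^L ≤ ‖η‖ := hL1
          _ ≤ 8*2^(j+k) := h2
          _ = 2^(j+k+3) := by
              rw [show (8:ℝ) = 2^(3:ℤ) by norm_num, mul_comm, ← zpow_add₀ (two_ne_zero (α := ℝ))]
      have i1 : j + k < L + 3 := (zpow_lt_zpow_iff_right₀ (one_lt_two (α := ℝ))).mp e1
      have i2 : L ≤ j + k + 3 := (zpow_le_zpow_iff_right₀ (one_lt_two (α := ℝ))).mp e2
      rw [Finset.mem_Icc]
      omega
    rw [tsum_eq_sum hsupp]
    calc ∑ j ∈ Finset.Icc (L-3-k) (L+2-k),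
          Set.indicator {η : X | ‖η‖ ∈ Set.Icc ((2:ℝ)^(j+k)/4) (8 * 2^(j+k))} f η
        ≤ ∑ _j ∈ Finset.Icc (L-3-k) (L+2-k), f η :=
          Finset.sum_le_sum fun j _ => Set.indicator_le_self _ _ η
      _ = (Finset.Icc (L-3-k) (L+2-k)).card • f η := by rw [Finset.sum_const]
      _ = 6 * f η := by
          rw [Int.card_Icc, show L+2-k+1-(L-3-k) = 6 by ring]
          simp [nsmul_eq_mul]
  · have hz : ∀ j : ℤ, Set.indicator
        {η : X | ‖η‖ ∈ Set.Icc ((2:ℝ)^(j+k)/4) (8 * 2^(j+k))} f η = 0 := by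
      intro j
      rw [Set.indicator_of_notMem]
      intro hmem
      have := hmem.1
      have hp : (0:ℝ) < 2^(j+k)/4 := by positivity
      have : (0:ℝ) < ‖η‖ := lt_of_lt_of_le hp this
      exact hr this
    simp only [hz, tsum_zero]
    exact zero_le

lemma main_aux {d : ℕ} (w : ℤ → ℝ → ℝ≥0∞) (hwm : ∀ j, Measurable (w j))
    (g : (EuclideanSpace ℝ (Fin d)) → ℂ)
    (hgs : ∀ ξ, g ξ ≠ 0 → ‖ξ‖ ∈ Set.Icc (1/4 : ℝ) 4)
    (m : (EuclideanSpace ℝ (Fin d)) → ℂ) (hm : Measurable m) (k : ℤ) :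
    ∫⁻ ξ : (EuclideanSpace ℝ (Fin d)),
        (∑' j : ℤ, ∫⁻ s in Set.Icc (1 : ℝ) 2,
            w j s * (‖m (((2 : ℝ) ^ (j + k) * s) • ξ)‖₊ : ℝ≥0∞) ^ 2) *
          (‖g ξ‖₊ : ℝ≥0∞) ^ 2 ≤
      ENNReal.ofReal (6 * 4 ^ d) *
        (⨆ j : ℤ, ∫⁻ s in Set.Icc (1 : ℝ) 2, w j s) *
        (⨆ ξ : (EuclideanSpace ℝ (Fin d)), (‖g ξ‖₊ : ℝ≥0∞)) ^ 2 *
        ∫⁻ ξ : (EuclideanSpace ℝ (Fin d)),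
          (‖m ξ‖₊ : ℝ≥0∞) ^ 2 * (‖ξ‖₊ : ℝ≥0∞) ^ (-(d : ℝ)) := by
  set S : Set (EuclideanSpace ℝ (Fin d)) := {ξ : (EuclideanSpace ℝ (Fin d)) | ‖ξ‖ ∈ Set.Icc (1/4 : ℝ) 4} with hSdef
  have hS : MeasurableSet S := measurable_norm measurableSet_Icc
  set h : (EuclideanSpace ℝ (Fin d)) → ℝ≥0∞ := fun η => (‖m η‖₊ : ℝ≥0∞) ^ 2 * (‖η‖₊ : ℝ≥0∞) ^ (-(d : ℝ)) with hhdef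
  have hhm : Measurable h := by
    rw [hhdef]
    exact ((hm.nnnorm.coe_nnreal_ennreal).pow_const 2).mul
      ((measurable_nnnorm.coe_nnreal_ennreal).pow_const (-(d : ℝ)))
  set A : ℝ≥0∞ := ⨆ j : ℤ, ∫⁻ s in Set.Icc (1:ℝ) 2, w j s with hAdef
  set G : ℝ≥0∞ := ⨆ ξ : (EuclideanSpace ℝ (Fin d)), (‖g ξ‖₊ : ℝ≥0∞) with hGdef
  set M : ℝ≥0∞ := ∫⁻ η : (EuclideanSpace ℝ (Fin d)), h η with hMdef
  set F : (EuclideanSpace ℝ (Fin d)) → ℝ≥0∞ := fun ξ => ∑' j : ℤ, ∫⁻ s in Set.Icc (1:ℝ) 2,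
    w j s * (‖m (((2 : ℝ) ^ (j + k) * s) • ξ)‖₊ : ℝ≥0∞) ^ 2 with hFdef
  -- measurability of the product integrand
  have hΦm : ∀ j : ℤ, Measurable (fun p : (EuclideanSpace ℝ (Fin d)) × ℝ =>
      w j p.2 * (‖m (((2:ℝ)^(j+k) * p.2) • p.1)‖₊ : ℝ≥0∞) ^ 2) := by
    intro j
    apply Measurable.mul
    · exact (hwm j).comp measurable_snd
    · have hsm : Measurable fun p : (EuclideanSpace ℝ (Fin d)) × ℝ => ((2:ℝ)^(j+k) * p.2) • p.1 :=
        ((continuous_const.mul continuous_snd).smul continuous_fst).measurable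
      exact ((hm.comp hsm).nnnorm.coe_nnreal_ennreal).pow_const 2
  have hFm : Measurable F := by
    rw [hFdef]
    apply Measurable.ennreal_tsum
    intro j
    exact (hΦm j).lintegral_prod_right'
  -- annuli
  set Ann : ℤ → Set (EuclideanSpace ℝ (Fin d)) := fun j => {η : (EuclideanSpace ℝ (Fin d)) | ‖η‖ ∈ Set.Icc ((2:ℝ)^(j+k)/4) (8 * 2^(j+k))}
    with hAnnDef
  have hAnn : ∀ j, MeasurableSet (Ann j) := fun j => measurable_norm measurableSet_Icc
  set I2 : ℤ → ℝ≥0∞ := fun j => ∫⁻ η in Ann j, h η with hI2def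
  -- Step 1: pointwise bound using g
  have step1 : ∀ ξ : (EuclideanSpace ℝ (Fin d)), F ξ * (‖g ξ‖₊ : ℝ≥0∞) ^ 2 ≤ S.indicator F ξ * G ^ 2 := by
    intro ξ
    by_cases hx : g ξ = 0
    · simp [hx]
    · have hmemS : ξ ∈ S := hgs ξ hx
      rw [Set.indicator_of_mem hmemS]
      gcongr
      exact le_iSup (fun ξ : (EuclideanSpace ℝ (Fin d)) => (‖g ξ‖₊ : ℝ≥0∞)) ξ
  -- Step 3: per-j bound
  have step3 : ∀ j : ℤ, (∫⁻ ξ in S, ∫⁻ s in Set.Icc (1:ℝ) 2,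
      w j s * (‖m (((2:ℝ)^(j+k) * s) • ξ)‖₊ : ℝ≥0∞) ^ 2) ≤ (4:ℝ≥0∞)^d * (A * I2 j) := by
    intro j
    have hswap : (∫⁻ ξ in S, ∫⁻ s in Set.Icc (1:ℝ) 2,
        w j s * (‖m (((2:ℝ)^(j+k) * s) • ξ)‖₊ : ℝ≥0∞) ^ 2) =
        ∫⁻ s in Set.Icc (1:ℝ) 2, ∫⁻ ξ in S,
        w j s * (‖m (((2:ℝ)^(j+k) * s) • ξ)‖₊ : ℝ≥0∞) ^ 2 :=
      lintegral_lintegral_swap ((hΦm j).aemeasurable)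
    rw [hswap]
    have hinner : ∀ s ∈ Set.Icc (1:ℝ) 2, (∫⁻ ξ in S,
        w j s * (‖m (((2:ℝ)^(j+k) * s) • ξ)‖₊ : ℝ≥0∞) ^ 2) ≤
        w j s * ((4:ℝ≥0∞)^d * I2 j) := by
      intro s hs
      have hc : 0 < (2:ℝ)^(j+k) * s :=
        mul_pos (zpow_pos two_pos _) (lt_of_lt_of_le one_pos hs.1)
      have hmeas : Measurable fun ξ : (EuclideanSpace ℝ (Fin d)) => (‖m (((2:ℝ)^(j+k) * s) • ξ)‖₊ : ℝ≥0∞) ^ 2 := by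
        have : Measurable fun ξ : (EuclideanSpace ℝ (Fin d)) => ((2:ℝ)^(j+k) * s) • ξ :=
          measurable_const_smul _
        exact ((hm.comp this).nnnorm.coe_nnreal_ennreal).pow_const 2
      rw [lintegral_const_mul _ hmeas]
      gcongr
      calc (∫⁻ ξ in S, (‖m (((2:ℝ)^(j+k) * s) • ξ)‖₊ : ℝ≥0∞) ^ 2)
          ≤ (4:ℝ≥0∞)^d * ∫⁻ η in {η : (EuclideanSpace ℝ (Fin d)) | ‖η‖ ∈ Set.Icc (((2:ℝ)^(j+k)*s)/4) (4*((2:ℝ)^(j+k)*s))},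
              h η := scale_est m hm hc
        _ ≤ (4:ℝ≥0∞)^d * I2 j := by
            gcongr
            apply lintegral_mono_set
            intro η hmem
            obtain ⟨h1, h2⟩ := hmem
            have hp : (0:ℝ) < (2:ℝ)^(j+k) := zpow_pos two_pos _
            constructor
            · nlinarith [hs.1]
            · nlinarith [hs.2]
    calc (∫⁻ s in Set.Icc (1:ℝ) 2, ∫⁻ ξ in S,
          w j s * (‖m (((2:ℝ)^(j+k) * s) • ξ)‖₊ : ℝ≥0∞) ^ 2)
        ≤ ∫⁻ s in Set.Icc (1:ℝ) 2, w j s * ((4:ℝ≥0∞)^d * I2 j) :=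
          setLIntegral_mono' measurableSet_Icc hinner
      _ = (∫⁻ s in Set.Icc (1:ℝ) 2, w j s) * ((4:ℝ≥0∞)^d * I2 j) :=
          lintegral_mul_const _ (hwm j)
      _ ≤ A * ((4:ℝ≥0∞)^d * I2 j) := by
          gcongr
          exact le_iSup (fun j : ℤ => ∫⁻ s in Set.Icc (1:ℝ) 2, w j s) j
      _ = (4:ℝ≥0∞)^d * (A * I2 j) := by ring
  -- Step 4: sum the annuli integrals
  have step4 : ∑' j : ℤ, I2 j ≤ 6 * M := by
    have : ∀ j : ℤ, I2 j = ∫⁻ η : (EuclideanSpace ℝ (Fin d)), (Ann j).indicator h η := by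
      intro j
      rw [lintegral_indicator (hAnn j)]
    calc ∑' j : ℤ, I2 j = ∑' j : ℤ, ∫⁻ η : (EuclideanSpace ℝ (Fin d)), (Ann j).indicator h η := by
          exact tsum_congr this
      _ = ∫⁻ η : (EuclideanSpace ℝ (Fin d)), ∑' j : ℤ, (Ann j).indicator h η :=
          (lintegral_tsum fun j => (hhm.indicator (hAnn j)).aemeasurable).symm
      _ ≤ ∫⁻ η : (EuclideanSpace ℝ (Fin d)), 6 * h η := lintegral_mono fun η => count_aux k h η
      _ = 6 * M := lintegral_const_mul _ hhm
  -- assemble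
  have hC : ENNReal.ofReal ((6:ℝ) * 4 ^ d) = 6 * 4 ^ d := by
    rw [ENNReal.ofReal_mul (by norm_num), ENNReal.ofReal_pow (by norm_num)]
    norm_num
  calc ∫⁻ ξ : (EuclideanSpace ℝ (Fin d)), F ξ * (‖g ξ‖₊ : ℝ≥0∞) ^ 2
      ≤ ∫⁻ ξ : (EuclideanSpace ℝ (Fin d)), S.indicator F ξ * G ^ 2 := lintegral_mono step1
    _ = (∫⁻ ξ : (EuclideanSpace ℝ (Fin d)), S.indicator F ξ) * G ^ 2 := lintegral_mul_const _ (hFm.indicator hS)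
    _ = (∫⁻ ξ in S, F ξ) * G ^ 2 := by rw [lintegral_indicator hS]
    _ = (∑' j : ℤ, ∫⁻ ξ in S, ∫⁻ s in Set.Icc (1:ℝ) 2,
          w j s * (‖m (((2:ℝ)^(j+k) * s) • ξ)‖₊ : ℝ≥0∞) ^ 2) * G ^ 2 := by
        rw [hFdef]
        congr 1
        exact lintegral_tsum fun j => ((hΦm j).lintegral_prod_right').aemeasurable
    _ ≤ (∑' j : ℤ, (4:ℝ≥0∞)^d * (A * I2 j)) * G ^ 2 := by
        gcongr with j
        exact step3 j
    _ = ((4:ℝ≥0∞)^d * (A * ∑' j : ℤ, I2 j)) * G ^ 2 := by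
        rw [ENNReal.tsum_mul_left, ENNReal.tsum_mul_left]
    _ ≤ ((4:ℝ≥0∞)^d * (A * (6 * M))) * G ^ 2 := by gcongr
    _ = ENNReal.ofReal ((6:ℝ) * 4 ^ d) * A * G ^ 2 * M := by rw [hC]; ring

theorem stmt14 (d : ℕ) (hd : 1 ≤ d) :
    ∃ C : ℝ, 0 < C ∧
      ∀ E : Set ℝ, E ⊆ Set.Ioi 0 → (∀ j : ℤ, (2 : ℝ) ^ j ∈ E) →
      ∀ β : ℝ, 0 < β →
        (⨆ j : ℤ, ∫⁻ s in Set.Icc (1 : ℝ) 2,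
          ENNReal.ofReal (Metric.infDist s (dilSet E j) ^ (-1 + 2 * β))) < ⊤ →
      ∀ g : EuclideanSpace ℝ (Fin d) → ℂ, (∃ M : ℝ, ∀ ξ, ‖g ξ‖ ≤ M) →
        (∀ ξ, g ξ ≠ 0 → ‖ξ‖ ∈ Set.Icc (1 / 4 : ℝ) 4) →
      ∀ m : EuclideanSpace ℝ (Fin d) → ℂ, Measurable m →
        (⨆ k : ℤ, ∫⁻ ξ : EuclideanSpace ℝ (Fin d),
            (∑' j : ℤ, ∫⁻ s in Set.Icc (1 : ℝ) 2,
                ENNReal.ofReal (Metric.infDist s (dilSet E j) ^ (-1 + 2 * β)) *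
                  (‖m (((2 : ℝ) ^ (j + k) * s) • ξ)‖₊ : ℝ≥0∞) ^ 2) *
              (‖g ξ‖₊ : ℝ≥0∞) ^ 2) ≤
          ENNReal.ofReal C *
            (⨆ j : ℤ, ∫⁻ s in Set.Icc (1 : ℝ) 2,
              ENNReal.ofReal (Metric.infDist s (dilSet E j) ^ (-1 + 2 * β))) *
            (⨆ ξ : EuclideanSpace ℝ (Fin d), (‖g ξ‖₊ : ℝ≥0∞)) ^ 2 *
            ∫⁻ ξ : EuclideanSpace ℝ (Fin d),
              (‖m ξ‖₊ : ℝ≥0∞) ^ 2 * (‖ξ‖₊ : ℝ≥0∞) ^ (-(d : ℝ)) := by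
  refine ⟨6 * 4 ^ d, by positivity, ?_⟩
  intro E _hE _hE2 β _hβ _hA g _hgb hgs m hm
  apply iSup_le
  intro k
  have hwm : ∀ j : ℤ, Measurable (fun s : ℝ =>
      ENNReal.ofReal (Metric.infDist s (dilSet E j) ^ (-1 + 2 * β))) := by
    intro j
    apply ENNReal.measurable_ofReal.comp
    exact (Metric.continuous_infDist_pt _).measurable.pow_const _
  exact main_aux _ hwm g hgs m hm k
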